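/- Let k be a field with algebraic closure k̄, and let a₀, a₁ ∈ k[U, V] be homogeneous polynomials of degree 2 with a₀ ≠ 0. Assume that a₀ divides a₁² in k[U, V], and that there is no homogeneous linear form ℓ ∈ k̄[U, V] such that ℓ² divides the image of a₀ and ℓ divides the image of a₁ in k̄[U, V]. Then there exists β ∈ k with a₁ = β·a₀. -/

import Mathlib

open MvPolynomial

section Aux

variable {K : Type*} [Field K]

private lemma primeX0 : Prime (X 0 : MvPolynomial (Fin 2) K) := by
  rw [← MulEquiv.prime_iff (finSuccEquiv K 1).toMulEquiv]
  have : ((finSuccEquiv K 1).toMulEquiv (X 0))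
      = (Polynomial.X : Polynomial (MvPolynomial (Fin 1) K)) := by
    simp [finSuccEquiv_X_zero]
  rw [this]
  exact Polynomial.prime_X

/-- The shear automorphism `X 0 ↦ X 0 + c • X 1`. -/
private noncomputable def shear (c : K) :
    MvPolynomial (Fin 2) K ≃ₐ[K] MvPolynomial (Fin 2) K :=
  AlgEquiv.ofAlgHom (aeval ![X 0 + C c * X 1, X 1]) (aeval ![X 0 - C c * X 1, X 1])
    (by ext i : 1; fin_cases i <;> simp)
    (by ext i : 1; fin_cases i <;> simp)

private lemma prime_linear_left {a : K} (b : K) (ha : a ≠ 0) :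
    Prime (C a * X 0 + C b * X 1 : MvPolynomial (Fin 2) K) := by
  have hp : Prime (X 0 + C (a⁻¹ * b) * X 1 : MvPolynomial (Fin 2) K) := by
    have h := MulEquiv.prime_iff (shear (a⁻¹ * b)).toMulEquiv (p := (X 0 : MvPolynomial (Fin 2) K))
    have h2 : (shear (a⁻¹*b)).toMulEquiv (X 0)
        = (X 0 + C (a⁻¹*b) * X 1 : MvPolynomial (Fin 2) K) := by
      simp [shear]
    rw [h2] at h
    exact h.mpr primeX0
  have heq : (C a * X 0 + C b * X 1 : MvPolynomial (Fin 2) K)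
      = C a * (X 0 + C (a⁻¹ * b) * X 1) := by
    rw [mul_add, ← mul_assoc, ← C_mul, ← mul_assoc, mul_inv_cancel₀ ha, one_mul]
  rw [heq]
  exact ((associated_unit_mul_left _ _
    (ha.isUnit.map (C : K →+* MvPolynomial (Fin 2) K))).symm).prime hp

private lemma prime_linear {a b : K} (hab : a ≠ 0 ∨ b ≠ 0) :
    Prime (C a * X 0 + C b * X 1 : MvPolynomial (Fin 2) K) := by
  rcases hab with ha | hb
  · exact prime_linear_left b ha
  · have h := MulEquiv.prime_iff (renameEquiv K (Equiv.swap (0:Fin 2) 1)).toMulEquiv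
      (p := (C b * X 0 + C a * X 1 : MvPolynomial (Fin 2) K))
    have h2 : (renameEquiv K (Equiv.swap (0:Fin 2) 1)).toMulEquiv (C b * X 0 + C a * X 1)
        = (C a * X 0 + C b * X 1 : MvPolynomial (Fin 2) K) := by
      simp [renameEquiv, add_comm]
    rw [h2] at h
    exact h.mpr (prime_linear_left a hb)

private lemma degree_fin2 (d : Fin 2 →₀ ℕ) : d.degree = d 0 + d 1 := by
  rw [Finsupp.degree_apply, Finset.sum_subset (Finset.subset_univ _)
    (fun i _ hi => Finsupp.notMem_support_iff.mp hi), Fin.sum_univ_two]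

private lemma quad_rep {R : Type*} [CommRing R] {f : MvPolynomial (Fin 2) R}
    (hf : f.IsHomogeneous 2) :
    f = C (coeff (Finsupp.single 0 2) f) * X 0 ^ 2
      + C (coeff (Finsupp.single 0 1 + Finsupp.single 1 1) f) * (X 0 * X 1)
      + C (coeff (Finsupp.single 1 2) f) * X 1 ^ 2 := by
  have hXX : (X 0 * X 1 : MvPolynomial (Fin 2) R)
      = monomial (Finsupp.single 0 1 + Finsupp.single 1 1) 1 := by
    rw [X, X, monomial_mul, one_mul]
  ext d
  rw [coeff_add, coeff_add, X_pow_eq_monomial, X_pow_eq_monomial, hXX,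
    C_mul_monomial, C_mul_monomial, C_mul_monomial, mul_one, mul_one, mul_one,
    coeff_monomial, coeff_monomial, coeff_monomial]
  by_cases hd : d 0 + d 1 = 2
  · have hd0 : d 0 ≤ 2 := by omega
    interval_cases h0 : d 0
    · have : d = Finsupp.single 1 2 := by
        ext i; fin_cases i <;> simp [h0] <;> omega
      subst this
      rw [if_neg (by intro h; simpa using DFunLike.congr_fun h 0),
        if_neg (by intro h; simpa using DFunLike.congr_fun h 0), if_pos rfl]
      ring
    · have : d = Finsupp.single 0 1 + Finsupp.single 1 1 := by
        ext i; fin_cases i <;> simp [h0] <;> omega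
      subst this
      rw [if_neg (by intro h; simpa using DFunLike.congr_fun h 1),
        if_pos rfl, if_neg (by intro h; simpa using DFunLike.congr_fun h 0)]
      ring
    · have : d = Finsupp.single 0 2 := by
        ext i; fin_cases i <;> simp [h0] <;> omega
      subst this
      rw [if_pos rfl, if_neg (by intro h; simpa using DFunLike.congr_fun h 1),
        if_neg (by intro h; simpa using DFunLike.congr_fun h 0)]
      ring
  · have h1 : coeff d f = 0 := hf.coeff_eq_zero (by rw [degree_fin2]; exact hd)
    have n1 : Finsupp.single (0 : Fin 2) 2 ≠ d := by
      intro h; rw [← h] at hd; simp at hd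
    have n2 : Finsupp.single (0:Fin 2) 1 + Finsupp.single 1 1 ≠ d := by
      intro h; rw [← h] at hd; simp at hd
    have n3 : Finsupp.single (1 : Fin 2) 2 ≠ d := by
      intro h; rw [← h] at hd; simp at hd
    rw [h1, if_neg n1, if_neg n2, if_neg n3]
    simp

private lemma primeX1 : Prime (X 1 : MvPolynomial (Fin 2) K) := by
  have h := MulEquiv.prime_iff (renameEquiv K (Equiv.swap (0:Fin 2) 1)).toMulEquiv
    (p := (X 0 : MvPolynomial (Fin 2) K))
  have h2 : (renameEquiv K (Equiv.swap (0:Fin 2) 1)).toMulEquiv (X 0)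
      = (X 1 : MvPolynomial (Fin 2) K) := by simp
  rw [h2] at h
  exact h.mpr primeX0

/-- A nonzero binary quadratic form over an algebraically closed field is a
product of two linear forms, each of which is prime. -/
private lemma quad_factor [IsAlgClosed K] {f : MvPolynomial (Fin 2) K}
    (hf : f.IsHomogeneous 2) (h0 : f ≠ 0) :
    ∃ l₁ l₂ : MvPolynomial (Fin 2) K,
      l₁.IsHomogeneous 1 ∧ l₂.IsHomogeneous 1 ∧ Prime l₁ ∧ Prime l₂ ∧ f = l₁ * l₂ := by
  have rep := quad_rep hf
  set p := coeff (Finsupp.single 0 2) f with hpdef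
  set q := coeff (Finsupp.single 0 1 + Finsupp.single 1 1) f with hqdef
  set r := coeff (Finsupp.single 1 2) f with hrdef
  by_cases hp : p = 0
  · have hqr : q ≠ 0 ∨ r ≠ 0 := by
      by_contra hqr
      push_neg at hqr
      exact h0 (by rw [rep, hp, hqr.1, hqr.2]; simp)
    exact ⟨X 1, C q * X 0 + C r * X 1, isHomogeneous_X _ _,
      (isHomogeneous_C_mul_X q 0).add (isHomogeneous_C_mul_X r 1),
      primeX1, prime_linear hqr, by rw [rep, hp, map_zero]; ring⟩
  · obtain ⟨α, hα⟩ : ∃ α : K, p * α ^ 2 + q * α + r = 0 := by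
      obtain ⟨α, h⟩ := IsAlgClosed.exists_root (k := K)
        (Polynomial.C p * Polynomial.X ^ 2 + Polynomial.C q * Polynomial.X + Polynomial.C r)
        (by rw [Polynomial.degree_quadratic hp]; norm_num)
      exact ⟨α, by simpa [Polynomial.IsRoot] using h⟩
    have hr : r = -(p * α ^ 2 + q * α) := by linear_combination hα
    have hprime1 : Prime (X 0 - C α * X 1 : MvPolynomial (Fin 2) K) := by
      have : (X 0 - C α * X 1 : MvPolynomial (Fin 2) K) = C 1 * X 0 + C (-α) * X 1 := by
        rw [map_one, map_neg, one_mul]; ring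
      rw [this]
      exact prime_linear (Or.inl one_ne_zero)
    refine ⟨X 0 - C α * X 1, C p * X 0 + C (p * α + q) * X 1,
      (isHomogeneous_X _ _).sub (isHomogeneous_C_mul_X α 1),
      (isHomogeneous_C_mul_X p 0).add (isHomogeneous_C_mul_X _ 1),
      hprime1, prime_linear (Or.inl hp), ?_⟩
    rw [rep, hr]
    simp only [map_add, map_mul, map_neg, map_pow]
    ring

/-- If two homogeneous polynomials of the same degree divide one another,
the quotient is a constant. -/
private lemma hom_quot_const {R : Type*} [CommRing R] {σ : Type*}
    {f g m : MvPolynomial σ R} {n : ℕ}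
    (hf : f.IsHomogeneous n) (hg : g.IsHomogeneous n) (h : f = g * m) :
    f = g * C (coeff 0 m) := by
  have h1 : homogeneousComponent n f = f := by
    rw [homogeneousComponent_of_mem ((mem_homogeneousSubmodule n f).mpr hf), if_pos rfl]
  have hm : ∑ i ∈ Finset.range (m.totalDegree + 1), homogeneousComponent i m = m :=
    sum_homogeneousComponent m
  calc f = homogeneousComponent n f := h1.symm
    _ = homogeneousComponent n
        (g * ∑ i ∈ Finset.range (m.totalDegree + 1), homogeneousComponent i m) := by
        rw [hm, ← h]
    _ = ∑ i ∈ Finset.range (m.totalDegree + 1),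
        homogeneousComponent n (g * homogeneousComponent i m) := by
        rw [Finset.mul_sum, map_sum]
    _ = g * homogeneousComponent 0 m := by
        rw [Finset.sum_eq_single_of_mem 0 (Finset.mem_range.mpr (Nat.succ_pos _))]
        · rw [homogeneousComponent_of_mem ((mem_homogeneousSubmodule _ _).mpr
            (hg.mul (homogeneousComponent_isHomogeneous 0 m))), if_pos (by omega)]
        · intro i _ hi
          rw [homogeneousComponent_of_mem ((mem_homogeneousSubmodule _ _).mpr
            (hg.mul (homogeneousComponent_isHomogeneous i m))), if_neg (by omega)]
    _ = g * C (coeff 0 m) := by rw [homogeneousComponent_zero]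

end Aux

/-- **A binary quadratic form dividing the square of another one.**
(Kollár–Mella, proof of Proposition 13) -/
theorem binary_form_divides (k : Type*) [Field k]
    (a₀ a₁ : MvPolynomial (Fin 2) k)
    (h₀ : a₀.IsHomogeneous 2) (h₁ : a₁.IsHomogeneous 2) (ha₀ : a₀ ≠ 0)
    (hdvd : a₀ ∣ a₁ ^ 2)
    (hnd : ¬ ∃ ℓ : MvPolynomial (Fin 2) (AlgebraicClosure k),
      ℓ.IsHomogeneous 1 ∧
      ℓ ^ 2 ∣ MvPolynomial.map (algebraMap k (AlgebraicClosure k)) a₀ ∧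
      ℓ ∣ MvPolynomial.map (algebraMap k (AlgebraicClosure k)) a₁) :
    ∃ β : k, a₁ = C β * a₀ := by
  set K := AlgebraicClosure k
  set φ := algebraMap k K with hφdef
  have hinj : Function.Injective φ := φ.injective
  have hminj : Function.Injective
      (MvPolynomial.map φ : MvPolynomial (Fin 2) k → MvPolynomial (Fin 2) K) :=
    map_injective φ hinj
  set A0 := MvPolynomial.map φ a₀ with hA0def
  set A1 := MvPolynomial.map φ a₁ with hA1def
  have hA0h : A0.IsHomogeneous 2 := h₀.map φ
  have hA1h : A1.IsHomogeneous 2 := h₁.map φ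
  have hA0ne : A0 ≠ 0 := fun h => ha₀ (hminj (by rw [map_zero, ← hA0def, h]))
  have hdvd' : A0 ∣ A1 ^ 2 := by
    obtain ⟨c, hc⟩ := hdvd
    exact ⟨MvPolynomial.map φ c, by rw [← map_pow, hc, map_mul]⟩
  obtain ⟨l₁, l₂, hl₁, hl₂, hp₁, hp₂, hfac⟩ := quad_factor hA0h hA0ne
  have hd1 : l₁ ∣ A1 := hp₁.dvd_of_dvd_pow (dvd_trans ⟨l₂, hfac⟩ hdvd')
  have hd2 : l₂ ∣ A1 :=
    hp₂.dvd_of_dvd_pow (dvd_trans ⟨l₁, by rw [hfac]; ring⟩ hdvd')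
  by_cases hass : l₂ ∣ l₁
  · exfalso
    apply hnd
    obtain ⟨c, hc⟩ := hass
    exact ⟨l₂, hl₂, ⟨c, by rw [hfac, hc]; ring⟩, hd2⟩
  · obtain ⟨m, hm⟩ := hd1
    have hl2m : l₂ ∣ m := ((hp₂.2.2 l₁ m (hm ▸ hd2)).resolve_left hass)
    obtain ⟨m₂, hm₂⟩ := hl2m
    have hA1' : A1 = A0 * m₂ := by rw [hfac, hm, hm₂]; ring
    have hA1C : A1 = A0 * C (coeff 0 m₂) := hom_quot_const hA1h hA0h hA1'
    obtain ⟨d, hdne⟩ := exists_coeff_ne_zero ha₀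
    have hφd : φ (coeff d a₀) ≠ 0 := fun h => hdne (hinj (by rw [h, map_zero]))
    have hγ : φ (coeff d a₁) = φ (coeff d a₀) * coeff 0 m₂ := by
      have := congrArg (coeff d) hA1C
      rwa [mul_comm A0, coeff_C_mul, coeff_map, coeff_map, mul_comm] at this
    have hβ : φ (coeff d a₁ / coeff d a₀) = coeff 0 m₂ := by
      rw [map_div₀, hγ, mul_comm, mul_div_assoc, div_self hφd, mul_one]
    refine ⟨coeff d a₁ / coeff d a₀, hminj ?_⟩
    rw [map_mul, map_C, ← hA1def, ← hA0def, hβ, hA1C, mul_comm]
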